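/- Let f : ℝ^d × ℝ^d × ℝ^k → ℝ^d be a message function. Suppose that for every finite set V, every symmetric edge set E ⊆ V × V, every vertex signal h : V → ℝ^d, and every symmetric edge signal e : V × V → ℝ^k (i.e., e(i,j) = e(j,i)), the message-passing update h'(i) = h(i) + ∑_{j : (i,j) ∈ E} f(h(i), h(j), e(i,j)) satisfies ∑_{i ∈ V} h'(i) = ∑_{i ∈ V} h(i). Then f(a, b, c) = -f(b, a, c) for all a, b ∈ ℝ^d and c ∈ ℝ^k. -/
import Mathlib


/-- Necessity direction of Theorem 3.1 (locally conservative GNN):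
if the message-passing update with identity update function conserves the
total sum on every graph, every vertex signal and every symmetric edge
signal, then the message function is antisymmetric in its first two
arguments. -/
theorem locally_conservative_gnn_necessity
    (d k : ℕ)
    (f : (Fin d → ℝ) → (Fin d → ℝ) → (Fin k → ℝ) → (Fin d → ℝ))
    (hcons : ∀ (V : Type) [Fintype V] [DecidableEq V]
      (E : Finset (V × V)), (∀ i j : V, (i, j) ∈ E → (j, i) ∈ E) →
      ∀ (h : V → Fin d → ℝ) (e : V × V → Fin k → ℝ),
        (∀ i j : V, e (i, j) = e (j, i)) →
        ∑ i, (h i + ∑ j ∈ Finset.univ.filter (fun j => (i, j) ∈ E),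
          f (h i) (h j) (e (i, j))) = ∑ i, h i) :
    ∀ (a b : Fin d → ℝ) (c : Fin k → ℝ), f a b c = - f b a c := by
  intro a b c
  have key := hcons Bool ({(true, false), (false, true)} : Finset (Bool × Bool))
    (by decide) (fun v => if v then a else b) (fun _ => c) (fun _ _ => rfl)
  simp [Fintype.sum_bool, Finset.filter_insert, Finset.filter_singleton] at key
  funext x
  have hx := congrFun key x
  simp [Pi.add_apply] at hx
  simp only [Pi.neg_apply]
  linarith
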